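/- arXiv:0910.4959 — 3 statements merged into one kernel-verified Lean document; each statement's English description precedes it below -/
import Mathlib

section
/- Let (Ω, F, (F_t)_{t≥0}, P) be a filtered probability space satisfying the N-usual conditions, and let (X_t)_{t≥0} be a real-valued adapted process on this space. Assume there exists a càdlàg process (Y_t)_{t≥0} which is a modification of (X_t)_{t≥0}. Then there exists a càdlàg and adapted modification of (X_t)_{t≥0}, and any such modification is indistinguishable from (Y_t)_{t≥0}. -/
open MeasureTheory Set Filter
open scoped NNReal ENNReal

variable {Ω : Type*}

/-- A set `A` is N-negligible with respect to the filtered probability space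
`(Ω, mΩ, 𝓕, P)` if it is covered by countably many sets `B n` with `B n ∈ 𝓕 n`
and `P (B n) = 0`. -/
def NNegligible {mΩ : MeasurableSpace Ω} (𝓕 : Filtration ℝ≥0 mΩ) (P : Measure Ω)
    (A : Set Ω) : Prop :=
  ∃ B : ℕ → Set Ω, (∀ n : ℕ, MeasurableSet[𝓕 (n : ℝ≥0)] (B n)) ∧
    (∀ n : ℕ, P (B n) = 0) ∧ A ⊆ ⋃ n, B n

/-- The filtered probability space satisfies the N-usual conditions: it is N-complete
(every N-negligible set belongs to `𝓕 0`) and the filtration is right-continuous. -/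
def NUsual {mΩ : MeasurableSpace Ω} (𝓕 : Filtration ℝ≥0 mΩ) (P : Measure Ω) : Prop :=
  (∀ A : Set Ω, NNegligible 𝓕 P A → MeasurableSet[𝓕 0] A) ∧
  ∀ t : ℝ≥0, (𝓕 t : MeasurableSpace Ω) = ⨅ u ∈ Set.Ioi t, 𝓕 u

/-- A function `f : ℝ≥0 → ℝ` is càdlàg: right-continuous everywhere and with finite left
limits at every positive point. -/
def IsCadlag (f : ℝ≥0 → ℝ) : Prop :=
  (∀ t : ℝ≥0, ContinuousWithinAt f (Set.Ici t) t) ∧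
  ∀ t : ℝ≥0, 0 < t → ∃ l : ℝ, Tendsto f (nhdsWithin t (Set.Iio t)) (nhds l)

namespace CadlagAux

open Topology

noncomputable def e (q : ℚ) : ℝ≥0 := Real.toNNReal q

lemma e_coe {q : ℚ} (hq : 0 ≤ q) : ((e q : ℝ≥0) : ℝ) = (q : ℝ) :=
  Real.coe_toNNReal _ (by exact_mod_cast hq)

lemma exists_e_btwn {a b : ℝ≥0} (h : a < b) : ∃ q : ℚ, a < e q ∧ e q < b := by
  obtain ⟨q, hq1, hq2⟩ := exists_rat_btwn (show (a:ℝ) < (b:ℝ) from h)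
  have hq0 : (0:ℚ) ≤ q := by
    have : (0:ℝ) ≤ (q:ℝ) := le_of_lt (lt_of_le_of_lt a.coe_nonneg hq1)
    exact_mod_cast this
  refine ⟨q, ?_, ?_⟩
  · rw [← NNReal.coe_lt_coe, e_coe hq0]; exact hq1
  · rw [← NNReal.coe_lt_coe, e_coe hq0]; exact hq2

noncomputable def F (t : ℝ≥0) : Filter ℚ := Filter.comap e (nhdsWithin t (Set.Ioi t))

instance F_neBot (t : ℝ≥0) : (F t).NeBot := by
  rw [F, Filter.comap_neBot_iff]
  intro U hU
  rcases (nhdsGT_basis t).mem_iff.mp hU with ⟨b, hb, hsub⟩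
  rcases exists_e_btwn hb with ⟨q, hq1, hq2⟩
  exact ⟨q, hsub ⟨hq1, hq2⟩⟩

lemma exists_seq {t u : ℝ≥0} (htu : t < u) :
    ∃ q : ℕ → ℚ, (∀ k, e (q k) ∈ Set.Ioo t u) ∧
      Tendsto (fun k => e (q k)) atTop (nhdsWithin t (Set.Ioi t)) := by
  have h1 : ∀ k : ℕ, t < min u (t + 1/((k:ℝ≥0)+1)) := by
    intro k
    refine lt_min htu (lt_add_of_pos_right _ ?_)
    positivity
  choose q hq1 hq2 using fun k => exists_e_btwn (h1 k)
  refine ⟨q, fun k => ⟨hq1 k, lt_of_lt_of_le (hq2 k) (min_le_left _ _)⟩, ?_⟩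
  rw [tendsto_nhdsWithin_iff]
  constructor
  · rw [← NNReal.tendsto_coe]
    apply tendsto_of_tendsto_of_tendsto_of_le_of_le (g := fun _ : ℕ => (t:ℝ))
      (h := fun k : ℕ => (t:ℝ) + 1/((k:ℝ)+1))
    · exact tendsto_const_nhds
    · have : Tendsto (fun k : ℕ => 1/((k:ℝ)+1)) atTop (nhds 0) :=
        tendsto_one_div_add_atTop_nhds_zero_nat
      simpa using tendsto_const_nhds.add this
    · intro k; exact_mod_cast le_of_lt (hq1 k)
    · intro k
      have h2 : e (q k) ≤ t + 1/((k:ℝ≥0)+1) := le_of_lt (lt_of_lt_of_le (hq2 k) (min_le_right _ _))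
      have := NNReal.coe_le_coe.mpr h2
      push_cast at this
      convert this using 2
  · exact Filter.Eventually.of_forall fun k => (hq1 k)

/-- The Billingsley `w''` condition for the rational skeleton `g` on `[0, n]`. -/
def W (n : ℕ) (g : ℚ → ℝ) : Prop :=
  ∀ m : ℕ, ∃ j : ℕ, ∀ a b c : ℚ, e a ≤ e b → e b ≤ e c → e c ≤ (n : ℝ≥0) →
    ((e c : ℝ≥0) : ℝ) ≤ ((e a : ℝ≥0) : ℝ) + 1/((j:ℝ)+1) →
    min |g b - g a| |g c - g b| ≤ 1/((m:ℝ)+1)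

lemma W_elim {g : ℚ → ℝ} (hg : ∀ n, W n g) (n : ℕ) {ε : ℝ} (hε : 0 < ε) :
    ∃ δ : ℝ, 0 < δ ∧ ∀ a b c : ℚ, e a ≤ e b → e b ≤ e c → e c ≤ (n : ℝ≥0) →
      ((e c : ℝ≥0) : ℝ) ≤ ((e a : ℝ≥0) : ℝ) + δ →
      min |g b - g a| |g c - g b| ≤ ε := by
  obtain ⟨m, hm⟩ := exists_nat_one_div_lt hε
  obtain ⟨j, hj⟩ := hg n m
  refine ⟨1/((j:ℝ)+1), by positivity, fun a b c h1 h2 h3 h4 => ?_⟩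
  exact le_trans (hj a b c h1 h2 h3 h4) (le_of_lt hm)

lemma pair_order {g : ℚ → ℝ} {s : Set ℝ≥0} {ε : ℝ} {q q' : ℚ}
    (h1 : e q ∈ s) (h2 : e q' ∈ s) (h3 : 3*ε < |g q - g q'|) :
    ∃ a b : ℚ, e a ∈ s ∧ e b ∈ s ∧ e a ≤ e b ∧ 3*ε < |g b - g a| := by
  rcases le_total (e q) (e q') with hle | hle
  · exact ⟨q, q', h1, h2, hle, by rwa [abs_sub_comm] at h3⟩
  · exact ⟨q', q, h2, h1, hle, h3⟩

lemma osc_right {g : ℚ → ℝ} (hg : ∀ n, W n g) (t : ℝ≥0) {ε : ℝ} (hε : 0 < ε) :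
    ∃ u : ℝ≥0, t < u ∧ ∀ q q' : ℚ, e q ∈ Set.Ioo t u → e q' ∈ Set.Ioo t u →
      |g q - g q'| ≤ 3*ε := by
  obtain ⟨n, hn⟩ := exists_nat_ge (t + 1)
  obtain ⟨δ, hδ, hW⟩ := W_elim hg n hε
  by_contra hcon
  push_neg at hcon
  have hcon' : ∀ u : ℝ≥0, t < u → ∃ a b : ℚ, e a ∈ Set.Ioo t u ∧ e b ∈ Set.Ioo t u ∧
      e a ≤ e b ∧ 3*ε < |g b - g a| := by
    intro u hu
    obtain ⟨q, q', hq, hq', hgt⟩ := hcon u hu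
    obtain ⟨a, b, ha, hb, hab, hgt'⟩ := pair_order hq hq' hgt
    exact ⟨a, b, ha, hb, hab, hgt'⟩
  set d : ℝ := min δ 1 with hd
  have hd0 : 0 < d := lt_min hδ one_pos
  set u₀ : ℝ≥0 := t + Real.toNNReal d with hu₀
  have htu₀ : t < u₀ := lt_add_of_pos_right _ (Real.toNNReal_pos.mpr hd0)
  have hu₀n : u₀ ≤ (n : ℝ≥0) := by
    have h1 : Real.toNNReal d ≤ 1 := by
      rw [show (1:ℝ≥0) = Real.toNNReal 1 by simp]
      exact Real.toNNReal_mono (min_le_right _ _)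
    calc u₀ ≤ t + 1 := add_le_add le_rfl h1
    _ ≤ (n:ℝ≥0) := hn
  have hspan : ∀ x y : ℝ≥0, x ∈ Set.Ioo t u₀ → y ∈ Set.Ioo t u₀ → (y:ℝ) ≤ (x:ℝ) + δ := by
    intro x y hx hy
    have h1 : (y:ℝ) < (t:ℝ) + d := by
      have := NNReal.coe_lt_coe.mpr hy.2
      rwa [hu₀, NNReal.coe_add, Real.coe_toNNReal _ (le_of_lt hd0)] at this
    have h2 : (t:ℝ) < (x:ℝ) := NNReal.coe_lt_coe.mpr hx.1
    have h3 : d ≤ δ := min_le_left _ _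
    linarith
  obtain ⟨a₁, b₁, ha₁, hb₁, hab₁, hgt₁⟩ := hcon' u₀ htu₀
  obtain ⟨a₂, b₂, ha₂, hb₂, hab₂, hgt₂⟩ := hcon' (e a₁) ha₁.1
  have hb₂a₁ : e b₂ ≤ e a₁ := le_of_lt hb₂.2
  have hsub : ∀ x : ℝ≥0, x ∈ Set.Ioo t (e a₁) → x ∈ Set.Ioo t u₀ :=
    fun x hx => ⟨hx.1, lt_trans hx.2 ha₁.2⟩
  have hεlt : ε < 3*ε := by linarith
  rcases le_or_gt |g a₁ - g b₂| ε with hcase | hcase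
  · -- |g b₁ - g b₂| > 2ε ; use triple (a₂, b₂, b₁)
    have habc := abs_sub_le (g b₁) (g b₂) (g a₁)
    have hcomm : |g b₂ - g a₁| = |g a₁ - g b₂| := abs_sub_comm _ _
    have h5 : ε < |g b₁ - g b₂| := by linarith
    have := hW a₂ b₂ b₁ hab₂ (le_trans hb₂a₁ hab₁)
      (le_trans (le_of_lt hb₁.2) hu₀n)
      (hspan (e a₂) (e b₁) (hsub _ ha₂) hb₁)
    rcases min_le_iff.mp this with h | h <;> linarith
  · -- use triple (a₂, b₂, a₁)
    have := hW a₂ b₂ a₁ hab₂ hb₂a₁ (le_trans (le_of_lt ha₁.2) hu₀n)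
      (hspan (e a₂) (e a₁) (hsub _ ha₂) ha₁)
    rcases min_le_iff.mp this with h | h <;> linarith

lemma osc_left {g : ℚ → ℝ} (hg : ∀ n, W n g) {t : ℝ≥0} (ht : 0 < t) {ε : ℝ} (hε : 0 < ε) :
    ∃ u : ℝ≥0, u < t ∧ ∀ q q' : ℚ, e q ∈ Set.Ioo u t → e q' ∈ Set.Ioo u t →
      |g q - g q'| ≤ 3*ε := by
  obtain ⟨n, hn⟩ := exists_nat_ge t
  obtain ⟨δ, hδ, hW⟩ := W_elim hg n hε
  by_contra hcon
  push_neg at hcon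
  have hcon' : ∀ u : ℝ≥0, u < t → ∃ a b : ℚ, e a ∈ Set.Ioo u t ∧ e b ∈ Set.Ioo u t ∧
      e a ≤ e b ∧ 3*ε < |g b - g a| := by
    intro u hu
    obtain ⟨q, q', hq, hq', hgt⟩ := hcon u hu
    obtain ⟨a, b, ha, hb, hab, hgt'⟩ := pair_order hq hq' hgt
    exact ⟨a, b, ha, hb, hab, hgt'⟩
  set d : ℝ := min δ 1 with hd
  have hd0 : 0 < d := lt_min hδ one_pos
  set u₀ : ℝ≥0 := t - Real.toNNReal d with hu₀
  have htu₀ : u₀ < t := tsub_lt_self ht (Real.toNNReal_pos.mpr hd0)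
  have hspan : ∀ x y : ℝ≥0, x ∈ Set.Ioo u₀ t → y ∈ Set.Ioo u₀ t → (y:ℝ) ≤ (x:ℝ) + δ := by
    intro x y hx hy
    have hdd : d ≤ δ := min_le_left _ _
    rcases le_total (Real.toNNReal d) t with hle | hle
    · have hcoe : (u₀:ℝ) = (t:ℝ) - d := by
        rw [hu₀, NNReal.coe_sub hle, Real.coe_toNNReal _ (le_of_lt hd0)]
      have h1 : (t:ℝ) - d < (x:ℝ) := by
        have := NNReal.coe_lt_coe.mpr hx.1; rwa [hcoe] at this
      have h2 : (y:ℝ) < (t:ℝ) := NNReal.coe_lt_coe.mpr hy.2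
      linarith
    · have h2 : (y:ℝ) < (t:ℝ) := NNReal.coe_lt_coe.mpr hy.2
      have h3 : (t:ℝ) ≤ d := by
        have := NNReal.coe_le_coe.mpr hle
        rwa [Real.coe_toNNReal _ (le_of_lt hd0)] at this
      have h4 : (0:ℝ) ≤ (x:ℝ) := x.coe_nonneg
      linarith
  obtain ⟨a₁, b₁, ha₁, hb₁, hab₁, hgt₁⟩ := hcon' u₀ htu₀
  obtain ⟨a₂, b₂, ha₂, hb₂, hab₂, hgt₂⟩ := hcon' (e b₁) hb₁.2
  have hb₁a₂ : e b₁ ≤ e a₂ := le_of_lt ha₂.1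
  have hsub : ∀ x : ℝ≥0, x ∈ Set.Ioo (e b₁) t → x ∈ Set.Ioo u₀ t :=
    fun x hx => ⟨lt_trans hb₁.1 hx.1, hx.2⟩
  have hεlt : ε < 3*ε := by linarith
  have htn : ∀ x : ℝ≥0, x ∈ Set.Ioo u₀ t → x ≤ (n:ℝ≥0) :=
    fun x hx => le_trans (le_of_lt hx.2) hn
  rcases le_or_gt |g a₂ - g b₁| ε with hcase | hcase
  · -- |g b₂ - g b₁| > 2ε ; triple (a₁, b₁, b₂)
    have habc := abs_sub_le (g b₂) (g b₁) (g a₂)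
    have hcomm : |g b₁ - g a₂| = |g a₂ - g b₁| := abs_sub_comm _ _
    have h5 : ε < |g b₂ - g b₁| := by linarith
    have := hW a₁ b₁ b₂ hab₁ (le_trans hb₁a₂ hab₂) (htn _ (hsub _ hb₂))
      (hspan (e a₁) (e b₂) ha₁ (hsub _ hb₂))
    rcases min_le_iff.mp this with h | h <;> linarith
  · -- triple (a₁, b₁, a₂)
    have := hW a₁ b₁ a₂ hab₁ hb₁a₂ (htn _ (hsub _ ha₂))
      (hspan (e a₁) (e a₂) ha₁ (hsub _ ha₂))
    rcases min_le_iff.mp this with h | h <;> linarith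

lemma Ioo_mem_F {t u : ℝ≥0} (h : t < u) : e ⁻¹' Set.Ioo t u ∈ F t :=
  Filter.preimage_mem_comap (Ioo_mem_nhdsGT_of_mem ⟨le_refl t, h⟩)

lemma exists_rlim {g : ℚ → ℝ} (hg : ∀ n, W n g) (t : ℝ≥0) :
    ∃ l : ℝ, Tendsto g (F t) (nhds l) := by
  apply CompleteSpace.complete
  rw [Metric.cauchy_iff]
  refine ⟨Filter.map_neBot, fun ε hε => ?_⟩
  obtain ⟨u, htu, hosc⟩ := osc_right hg t (show (0:ℝ) < ε/4 by linarith)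
  refine ⟨g '' (e ⁻¹' Set.Ioo t u), Filter.image_mem_map (Ioo_mem_F htu), ?_⟩
  rintro x ⟨q, hq, rfl⟩ y ⟨q', hq', rfl⟩
  rw [Real.dist_eq]
  calc |g q - g q'| ≤ 3*(ε/4) := hosc q q' hq hq'
  _ < ε := by linarith

noncomputable def rlim (g : ℚ → ℝ) (t : ℝ≥0) : ℝ := limUnder (F t) g

lemma rlim_spec {g : ℚ → ℝ} (hg : ∀ n, W n g) (t : ℝ≥0) :
    Tendsto g (F t) (nhds (rlim g t)) := by
  obtain ⟨l, hl⟩ := exists_rlim hg t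
  rw [rlim, hl.limUnder_eq]
  exact hl

lemma rlim_close {g : ℚ → ℝ} (hg : ∀ n, W n g) {t u s : ℝ≥0} (hts : t ≤ s) (hsu : s < u)
    {qr : ℚ} (hqr : e qr ∈ Set.Ioo t u) {ε : ℝ}
    (bound : ∀ q q' : ℚ, e q ∈ Set.Ioo t u → e q' ∈ Set.Ioo t u → |g q - g q'| ≤ ε) :
    |rlim g s - g qr| ≤ ε := by
  have htend : Tendsto (fun q => |g q - g qr|) (F s) (nhds |rlim g s - g qr|) :=
    ((rlim_spec hg s).sub tendsto_const_nhds).abs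
  refine le_of_tendsto htend ?_
  refine Filter.mem_of_superset (Ioo_mem_F hsu) fun q hq => ?_
  exact bound q qr ⟨lt_of_le_of_lt hts hq.1, hq.2⟩ hqr

lemma isCadlag_rlim_right {g : ℚ → ℝ} (hg : ∀ n, W n g) (t : ℝ≥0) :
    ContinuousWithinAt (rlim g) (Set.Ici t) t := by
  rw [Metric.continuousWithinAt_iff]
  intro ε hε
  obtain ⟨u, htu, hosc⟩ := osc_right hg t (show (0:ℝ) < ε/7 by linarith)
  refine ⟨(u:ℝ) - (t:ℝ), by simp [NNReal.coe_lt_coe.mpr htu], fun {s} hs hdist => ?_⟩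
  have hts : t ≤ s := hs
  have hsu : s < u := by
    rw [NNReal.dist_eq, abs_of_nonneg (by simp [NNReal.coe_le_coe.mpr hts])] at hdist
    rw [← NNReal.coe_lt_coe]; linarith
  obtain ⟨qr, hqr1, hqr2⟩ := exists_e_btwn htu
  have h1 : |rlim g s - g qr| ≤ 3*(ε/7) := rlim_close hg hts hsu ⟨hqr1, hqr2⟩ hosc
  have h2 : |rlim g t - g qr| ≤ 3*(ε/7) := rlim_close hg (le_refl t) htu ⟨hqr1, hqr2⟩ hosc
  rw [Real.dist_eq]
  have := abs_sub_le (rlim g s) (g qr) (rlim g t)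
  have hc : |g qr - rlim g t| = |rlim g t - g qr| := abs_sub_comm _ _
  linarith

lemma isCadlag_rlim_left {g : ℚ → ℝ} (hg : ∀ n, W n g) (t : ℝ≥0) (ht : 0 < t) :
    ∃ l : ℝ, Tendsto (rlim g) (nhdsWithin t (Set.Iio t)) (nhds l) := by
  haveI : (nhdsWithin t (Set.Iio t)).NeBot := nhdsWithin_Iio_self_neBot' ⟨0, ht⟩
  apply CompleteSpace.complete
  rw [Metric.cauchy_iff]
  refine ⟨Filter.map_neBot, fun ε hε => ?_⟩
  obtain ⟨u, hut, hosc⟩ := osc_left hg ht (show (0:ℝ) < ε/7 by linarith)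
  refine ⟨rlim g '' Set.Ioo u t, Filter.image_mem_map (Ioo_mem_nhdsLT_of_mem ⟨hut, le_refl t⟩), ?_⟩
  rintro x ⟨s, hs, rfl⟩ y ⟨s', hs', rfl⟩
  obtain ⟨qr, hqr1, hqr2⟩ := exists_e_btwn (show max s s' < t from max_lt hs.2 hs'.2)
  have hqrm : e qr ∈ Set.Ioo u t :=
    ⟨lt_trans (lt_of_lt_of_le hs.1 (le_max_left s s')) hqr1, hqr2⟩
  have h1 : |rlim g s - g qr| ≤ 3*(ε/7) := rlim_close hg (le_of_lt hs.1) hs.2 hqrm hosc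
  have h2 : |rlim g s' - g qr| ≤ 3*(ε/7) := rlim_close hg (le_of_lt hs'.1) hs'.2 hqrm hosc
  rw [Real.dist_eq]
  have := abs_sub_le (rlim g s) (g qr) (rlim g s')
  have hc : |g qr - rlim g s'| = |rlim g s' - g qr| := abs_sub_comm _ _
  linarith

lemma isCadlag_rlim {g : ℚ → ℝ} (hg : ∀ n, W n g) : IsCadlag (rlim g) :=
  ⟨fun t => isCadlag_rlim_right hg t, fun t ht => isCadlag_rlim_left hg t ht⟩

lemma cadlag_W {f : ℝ≥0 → ℝ} (hf : IsCadlag f) (n m : ℕ) :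
    ∃ j : ℕ, ∀ x y z : ℝ≥0, x ≤ y → y ≤ z → z ≤ (n:ℝ≥0) →
      (z:ℝ) ≤ (x:ℝ) + 1/((j:ℝ)+1) → min |f y - f x| |f z - f y| ≤ 1/((m:ℝ)+1) := by
  by_contra hcon
  push_neg at hcon
  choose x y z hxy hyz hzn hspan hmin using hcon
  have hy_mem : ∀ j, y j ∈ Set.Icc (0:ℝ≥0) (n:ℝ≥0) := fun j => ⟨zero_le, le_trans (hyz j) (hzn j)⟩
  obtain ⟨t, _, φ, hφ, hyt⟩ := (isCompact_Icc (a := (0:ℝ≥0)) (b := (n:ℝ≥0))).tendsto_subseq hy_mem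
  have hjtend : Tendsto (fun j : ℕ => 1/((φ j : ℝ)+1)) atTop (nhds 0) := by
    have h1 : Tendsto (fun j : ℕ => 1/((j:ℝ)+1)) atTop (nhds 0) :=
      tendsto_one_div_add_atTop_nhds_zero_nat
    exact h1.comp hφ.tendsto_atTop
  have hytR : Tendsto (fun j => ((y (φ j) : ℝ))) atTop (nhds (t:ℝ)) := by
    rw [NNReal.tendsto_coe]; exact hyt
  have hxt : Tendsto (fun j => x (φ j)) atTop (nhds t) := by
    rw [← NNReal.tendsto_coe]
    apply tendsto_of_tendsto_of_tendsto_of_le_of_le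
      (g := fun j => ((y (φ j) : ℝ)) - 1/((φ j : ℝ)+1)) (h := fun j => ((y (φ j) : ℝ)))
    · simpa using hytR.sub hjtend
    · exact hytR
    · intro j
      have h1 : (y (φ j) : ℝ) ≤ (z (φ j) : ℝ) := NNReal.coe_le_coe.mpr (hyz _)
      have h2 := hspan (φ j)
      linarith
    · intro j; exact NNReal.coe_le_coe.mpr (hxy _)
  have hzt : Tendsto (fun j => z (φ j)) atTop (nhds t) := by
    rw [← NNReal.tendsto_coe]
    apply tendsto_of_tendsto_of_tendsto_of_le_of_le
      (g := fun j => ((y (φ j) : ℝ))) (h := fun j => ((x (φ j) : ℝ)) + 1/((φ j : ℝ)+1))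
    · exact hytR
    · have hxtR : Tendsto (fun j => ((x (φ j) : ℝ))) atTop (nhds (t:ℝ)) := by
        rw [NNReal.tendsto_coe]; exact hxt
      simpa using hxtR.add hjtend
    · intro j; exact NNReal.coe_le_coe.mpr (hyz _)
    · intro j; exact hspan (φ j)
  have hmin' : ∀ j, 1/((m:ℝ)+1) < min |f (y j) - f (x j)| |f (z j) - f (y j)| := hmin
  by_cases hfreq : ∃ᶠ j in atTop, y (φ j) < t
  · -- left-limit case
    have ht0 : 0 < t := by
      obtain ⟨j, hj⟩ := hfreq.exists
      exact lt_of_le_of_lt zero_le hj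
    obtain ⟨l, hl⟩ := hf.2 t ht0
    obtain ⟨ψ, hψ, hmem⟩ := Filter.extraction_of_frequently_atTop hfreq
    have hylt : Tendsto (fun j => y (φ (ψ j))) (atTop) (nhdsWithin t (Set.Iio t)) := by
      rw [tendsto_nhdsWithin_iff]
      exact ⟨hyt.comp hψ.tendsto_atTop, Filter.Eventually.of_forall hmem⟩
    have hxlt : Tendsto (fun j => x (φ (ψ j))) (atTop) (nhdsWithin t (Set.Iio t)) := by
      rw [tendsto_nhdsWithin_iff]
      refine ⟨(hxt.comp hψ.tendsto_atTop), Filter.Eventually.of_forall fun j =>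
        lt_of_le_of_lt (hxy _) (hmem j)⟩
    have hdiff : Tendsto (fun j => |f (y (φ (ψ j))) - f (x (φ (ψ j)))|) atTop (nhds 0) := by
      have := (hl.comp hylt).sub (hl.comp hxlt)
      simpa using this.abs
    have hev := (hdiff.eventually (eventually_lt_nhds (show (0:ℝ) < 1/((m:ℝ)+1) by positivity)))
    obtain ⟨j, hj⟩ := hev.exists
    have := hmin' (φ (ψ j))
    have h2 := min_le_left |f (y (φ (ψ j))) - f (x (φ (ψ j)))| |f (z (φ (ψ j))) - f (y (φ (ψ j)))|
    linarith
  · -- right-continuity case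
    have hev : ∀ᶠ j in atTop, t ≤ y (φ j) := by
      rw [Filter.not_frequently] at hfreq
      exact hfreq.mono fun j hj => not_lt.mp hj
    have hyrt : Tendsto (fun j => y (φ j)) atTop (nhdsWithin t (Set.Ici t)) := by
      rw [tendsto_nhdsWithin_iff]; exact ⟨hyt, hev⟩
    have hzrt : Tendsto (fun j => z (φ j)) atTop (nhdsWithin t (Set.Ici t)) := by
      rw [tendsto_nhdsWithin_iff]
      exact ⟨hzt, hev.mono fun j hj => le_trans hj (hyz _)⟩
    have hrc := hf.1 t
    have hdiff : Tendsto (fun j => |f (z (φ j)) - f (y (φ j))|) atTop (nhds 0) := by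
      have := (hrc.tendsto.comp hzrt).sub (hrc.tendsto.comp hyrt)
      simpa using this.abs
    have hev2 := (hdiff.eventually (eventually_lt_nhds (show (0:ℝ) < 1/((m:ℝ)+1) by positivity)))
    obtain ⟨j, hj⟩ := hev2.exists
    have := hmin' (φ j)
    have h2 := min_le_right |f (y (φ j)) - f (x (φ j))| |f (z (φ j)) - f (y (φ j))|
    linarith

lemma meas_min_abs {Ω : Type*} {m : MeasurableSpace Ω} {u v w : Ω → ℝ} (hu : Measurable[m] u)
    (hv : Measurable[m] v) (hw : Measurable[m] w) (r : ℝ) :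
    MeasurableSet[m] {ω | min |v ω - u ω| |w ω - v ω| ≤ r} :=
  (((hv.sub hu).abs).min ((hw.sub hv).abs)) measurableSet_Iic

end CadlagAux

open CadlagAux

/-- On a space satisfying the N-usual conditions, an adapted process admitting a càdlàg
modification `Y` admits a càdlàg *adapted* modification, and any càdlàg adapted
modification is indistinguishable from `Y`. -/
theorem cadlag_adapted_modification {mΩ : MeasurableSpace Ω}
    (𝓕 : Filtration ℝ≥0 mΩ) (P : Measure Ω) [IsProbabilityMeasure P]
    (h : NUsual 𝓕 P) (X Y : ℝ≥0 → Ω → ℝ) (hX : Adapted 𝓕 X)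
    (hYcadlag : ∀ ω, IsCadlag fun t => Y t ω)
    (hmod : ∀ t : ℝ≥0, ∀ᵐ ω ∂P, X t ω = Y t ω) :
    (∃ Z : ℝ≥0 → Ω → ℝ, (∀ ω, IsCadlag fun t => Z t ω) ∧ Adapted 𝓕 Z ∧
      ∀ t : ℝ≥0, ∀ᵐ ω ∂P, X t ω = Z t ω) ∧
    ∀ Z : ℝ≥0 → Ω → ℝ,
      ((∀ ω, IsCadlag fun t => Z t ω) ∧ Adapted 𝓕 Z ∧
        ∀ t : ℝ≥0, ∀ᵐ ω ∂P, X t ω = Z t ω) →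
      ∀ᵐ ω ∂P, ∀ t : ℝ≥0, Z t ω = Y t ω := by
  classical
  have hae : ∀ᵐ ω ∂P, ∀ q : ℚ, X (e q) ω = Y (e q) ω := ae_all_iff.mpr fun q => hmod (e q)
  -- the bad sets
  set C : ℕ → Set Ω := fun n => {ω | ¬ W n (fun q => X (e q) ω)} with hC
  have hCmeas : ∀ n : ℕ, MeasurableSet[𝓕 (n : ℝ≥0)] (C n) := by
    intro n
    have hWm : MeasurableSet[𝓕 (n:ℝ≥0)] {ω | W n (fun q => X (e q) ω)} := by
      have hdec : {ω | W n (fun q => X (e q) ω)} = ⋂ m : ℕ, ⋃ j : ℕ, ⋂ a : ℚ, ⋂ b : ℚ, ⋂ c : ℚ,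
          {ω | (e a ≤ e b ∧ e b ≤ e c ∧ e c ≤ (n:ℝ≥0) ∧
              ((e c : ℝ≥0):ℝ) ≤ ((e a : ℝ≥0):ℝ) + 1/((j:ℝ)+1)) →
            min |X (e b) ω - X (e a) ω| |X (e c) ω - X (e b) ω| ≤ 1/((m:ℝ)+1)} := by
        ext ω
        simp only [W, Set.mem_iInter, Set.mem_iUnion, Set.mem_setOf_eq, and_imp]
      rw [hdec]
      refine MeasurableSet.iInter fun m => MeasurableSet.iUnion fun j =>
        MeasurableSet.iInter fun a => MeasurableSet.iInter fun b =>
        MeasurableSet.iInter fun c => ?_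
      by_cases hc : e a ≤ e b ∧ e b ≤ e c ∧ e c ≤ (n:ℝ≥0) ∧
          ((e c : ℝ≥0):ℝ) ≤ ((e a : ℝ≥0):ℝ) + 1/((j:ℝ)+1)
      · have hma : Measurable[𝓕 (n:ℝ≥0)] (X (e a)) :=
          ((hX (e a)).mono (𝓕.mono (le_trans hc.1 (le_trans hc.2.1 hc.2.2.1))) le_rfl)
        have hmb : Measurable[𝓕 (n:ℝ≥0)] (X (e b)) :=
          ((hX (e b)).mono (𝓕.mono (le_trans hc.2.1 hc.2.2.1)) le_rfl)
        have hmc : Measurable[𝓕 (n:ℝ≥0)] (X (e c)) :=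
          ((hX (e c)).mono (𝓕.mono hc.2.2.1) le_rfl)
        have heq : {ω | (e a ≤ e b ∧ e b ≤ e c ∧ e c ≤ (n:ℝ≥0) ∧
              ((e c : ℝ≥0):ℝ) ≤ ((e a : ℝ≥0):ℝ) + 1/((j:ℝ)+1)) →
            min |X (e b) ω - X (e a) ω| |X (e c) ω - X (e b) ω| ≤ 1/((m:ℝ)+1)}
            = {ω | min |X (e b) ω - X (e a) ω| |X (e c) ω - X (e b) ω| ≤ 1/((m:ℝ)+1)} := by
          ext ω; exact ⟨fun hh => hh hc, fun hh _ => hh⟩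
        rw [heq]
        exact meas_min_abs hma hmb hmc _
      · have heq : {ω | (e a ≤ e b ∧ e b ≤ e c ∧ e c ≤ (n:ℝ≥0) ∧
              ((e c : ℝ≥0):ℝ) ≤ ((e a : ℝ≥0):ℝ) + 1/((j:ℝ)+1)) →
            min |X (e b) ω - X (e a) ω| |X (e c) ω - X (e b) ω| ≤ 1/((m:ℝ)+1)} = Set.univ := by
          ext ω; exact iff_of_true (fun hcc => absurd hcc hc) trivial
        rw [heq]
        exact MeasurableSet.univ
    exact hWm.compl
  -- W holds whenever the skeleton of X agrees with that of Y
  have hWofY : ∀ n : ℕ, ∀ ω : Ω, (∀ q : ℚ, X (e q) ω = Y (e q) ω) → W n (fun q => X (e q) ω) := by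
    intro n ω hall m
    obtain ⟨j, hj⟩ := cadlag_W (hYcadlag ω) n m
    refine ⟨j, fun a b c h1 h2 h3 h4 => ?_⟩
    simpa only [hall a, hall b, hall c] using hj (e a) (e b) (e c) h1 h2 h3 h4
  have hCnull : ∀ n : ℕ, P (C n) = 0 := by
    intro n
    refine measure_mono_null ?_ (ae_iff.mp hae)
    intro ω hω hcon
    exact hω (hWofY n ω hcon)
  set G : Set Ω := ⋃ n, C n with hG
  have hGneg : NNegligible 𝓕 P G := ⟨C, hCmeas, hCnull, Set.Subset.rfl⟩
  have hG0 : MeasurableSet[𝓕 0] G := h.1 G hGneg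
  have hGt : ∀ t : ℝ≥0, MeasurableSet[𝓕 t] G := fun t => (𝓕.mono (zero_le : (0:ℝ≥0) ≤ t)) _ hG0
  have hGnull : P G = 0 := measure_iUnion_null hCnull
  have hGood : ∀ ω : Ω, ω ∉ G → ∀ n : ℕ, W n (fun q => X (e q) ω) := by
    intro ω hω n
    by_contra hcon
    exact hω (Set.mem_iUnion.mpr ⟨n, hcon⟩)
  -- the regularized process
  set Z : ℝ≥0 → Ω → ℝ :=
    fun t ω => if ω ∈ G then 0 else rlim (fun q => X (e q) ω) t with hZ
  have hZcadlag : ∀ ω, IsCadlag fun t => Z t ω := by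
    intro ω
    by_cases hω : ω ∈ G
    · have : (fun t => Z t ω) = fun _ => (0:ℝ) := funext fun t => if_pos hω
      rw [this]
      exact ⟨fun t => continuousWithinAt_const, fun t ht => ⟨0, tendsto_const_nhds⟩⟩
    · have : (fun t => Z t ω) = rlim (fun q => X (e q) ω) := funext fun t => if_neg hω
      rw [this]
      exact isCadlag_rlim (hGood ω hω)
  have hZadapted : Adapted 𝓕 Z := by
    intro t
    have key : ∀ u : ℝ≥0, t < u → StronglyMeasurable[𝓕 u] (Z t) := by
      intro u htu
      obtain ⟨q, hqmem, hqtend⟩ := exists_seq htu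
      have hsm : ∀ k : ℕ, StronglyMeasurable[𝓕 u]
          (fun ω => if ω ∈ G then 0 else X (e (q k)) ω) := by
        intro k
        refine StronglyMeasurable.ite ((𝓕.mono (zero_le : (0:ℝ≥0) ≤ u)) _ hG0) stronglyMeasurable_const ?_
        exact ((hX (e (q k))).mono (𝓕.mono (le_of_lt (hqmem k).2)) le_rfl).stronglyMeasurable
      have hptw : ∀ ω : Ω, Tendsto (fun k => if ω ∈ G then 0 else X (e (q k)) ω)
          atTop (nhds (Z t ω)) := by
        intro ω
        by_cases hω : ω ∈ G
        · simp only [hω, if_pos, hZ, if_true]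
          exact tendsto_const_nhds
        · simp only [hω, if_neg, hZ, if_false]
          have hF : Tendsto (fun k => q k) atTop (F t) := by
            rw [F, Filter.tendsto_comap_iff]
            exact hqtend
          exact (rlim_spec (hGood ω hω) t).comp hF
      exact stronglyMeasurable_of_tendsto atTop hsm (tendsto_pi_nhds.mpr hptw)
    have hmeas : Measurable[(𝓕 t : MeasurableSpace Ω)] (Z t) := by
      rw [h.2 t]
      intro s hs
      rw [MeasurableSpace.measurableSet_iInf]
      intro u
      rw [MeasurableSpace.measurableSet_iInf]
      intro hu
      exact ((key u hu).measurable) hs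
    exact hmeas
  have hZmod : ∀ t : ℝ≥0, ∀ᵐ ω ∂P, X t ω = Z t ω := by
    intro t
    have hGae : ∀ᵐ ω ∂P, ω ∉ G := measure_eq_zero_iff_ae_notMem.mp hGnull
    filter_upwards [hae, hGae, hmod t] with ω h1 h2 h3
    have hZω : Z t ω = rlim (fun q => X (e q) ω) t := if_neg h2
    have hfun : (fun q => X (e q) ω) = (fun q => Y (e q) ω) := funext h1
    have het : Tendsto e (F t) (nhdsWithin t (Set.Ici t)) :=
      tendsto_comap.mono_right (nhdsWithin_mono t Set.Ioi_subset_Ici_self)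
    have hYt : Tendsto (fun q => Y (e q) ω) (F t) (nhds (Y t ω)) :=
      ((hYcadlag ω).1 t).tendsto.comp het
    rw [hZω, rlim, hfun, hYt.limUnder_eq]
    exact h3
  refine ⟨⟨Z, hZcadlag, hZadapted, hZmod⟩, ?_⟩
  rintro Z' ⟨hZ'c, _, hZ'm⟩
  have hae' : ∀ᵐ ω ∂P, ∀ q : ℚ, Z' (e q) ω = Y (e q) ω := by
    refine ae_all_iff.mpr fun q => ?_
    filter_upwards [hmod (e q), hZ'm (e q)] with ω h1 h2
    rw [← h2, h1]
  filter_upwards [hae'] with ω hω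
  intro t
  obtain ⟨q, hqmem, hqtend⟩ := exists_seq (show t < t + 1 from lt_add_of_pos_right t one_pos)
  have hseq : Tendsto (fun k => e (q k)) atTop (nhdsWithin t (Set.Ici t)) :=
    hqtend.mono_right (nhdsWithin_mono t Set.Ioi_subset_Ici_self)
  have hZt : Tendsto (fun k => Z' (e (q k)) ω) atTop (nhds (Z' t ω)) :=
    ((hZ'c ω).1 t).tendsto.comp hseq
  have hYt : Tendsto (fun k => Y (e (q k)) ω) atTop (nhds (Y t ω)) :=
    ((hYcadlag ω).1 t).tendsto.comp hseq
  have hZt' : Tendsto (fun k => Y (e (q k)) ω) atTop (nhds (Z' t ω)) :=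
    hZt.congr fun k => hω (q k)
  exact tendsto_nhds_unique hZt' hYt
end

section
/- Let (Ω, F, (F_t)_{t≥0}, P) be a filtered probability space satisfying the N-usual conditions, and let (X_t)_{t≥0} be a real-valued adapted process on this space. Assume there exists a process (Y_t)_{t≥0} with continuous paths which is a modification of (X_t)_{t≥0}. Then there exists a continuous and adapted modification of (X_t)_{t≥0}, and any such modification is indistinguishable from (Y_t)_{t≥0}. -/
open scoped Topology


open MeasureTheory Set Filter
open scoped NNReal ENNReal

variable {Ω : Type*}

noncomputable section
namespace CAM

def dy (p : ℕ × ℕ) : ℝ≥0 := p.2 / 2 ^ p.1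

def u (n : ℕ) (t : ℝ≥0) : ℝ≥0 := dy (n, ⌊(t : ℝ) * 2 ^ n⌋₊ + 1)

lemma dy_coe (p : ℕ × ℕ) : (dy p : ℝ) = p.2 / 2 ^ p.1 := by
  simp [dy]

lemma le_u (n : ℕ) (t : ℝ≥0) : (t : ℝ) ≤ u n t := by
  rw [u, dy_coe]
  rw [le_div_iff₀ (by positivity)]
  push_cast
  exact (Nat.lt_floor_add_one _).le

lemma u_le (n : ℕ) (t : ℝ≥0) : (u n t : ℝ) ≤ t + (1/2) ^ n := by
  rw [u, dy_coe, div_le_iff₀ (by positivity)]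
  push_cast
  have h1 : (⌊(t : ℝ) * 2 ^ n⌋₊ : ℝ) ≤ (t : ℝ) * 2 ^ n := Nat.floor_le (by positivity)
  have : ((1:ℝ)/2) ^ n * 2 ^ n = 1 := by
    rw [div_pow, one_pow, div_mul_cancel₀]
    positivity
  nlinarith [this]

lemma tendsto_u_coe (t : ℝ≥0) : Tendsto (fun n => (u n t : ℝ)) atTop (𝓝 t) := by
  have h1 : Tendsto (fun n : ℕ => (t : ℝ) + (1/2) ^ n) atTop (𝓝 ((t : ℝ) + 0)) :=
    tendsto_const_nhds.add (tendsto_pow_atTop_nhds_zero_of_lt_one (by norm_num) (by norm_num))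
  rw [add_zero] at h1
  exact tendsto_of_tendsto_of_tendsto_of_le_of_le tendsto_const_nhds h1
    (fun n => le_u n t) (fun n => u_le n t)

lemma tendsto_u (t : ℝ≥0) : Tendsto (fun n => u n t) atTop (𝓝 t) := by
  rw [← NNReal.tendsto_coe]
  exact tendsto_u_coe t


/-- `ω` is good if the restriction of `X · ω` to dyadics is locally uniformly continuous. -/
def good (X : ℝ≥0 → Ω → ℝ) (ω : Ω) : Prop :=
  ∀ N k : ℕ, ∃ m : ℕ, ∀ p q : ℕ × ℕ, dy p ≤ (N : ℝ≥0) → dy q ≤ (N : ℝ≥0) →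
    |(dy p : ℝ) - dy q| ≤ (1/2) ^ m → |X (dy p) ω - X (dy q) ω| ≤ 1/(k+1)

def S (X : ℝ≥0 → Ω → ℝ) (N k m : ℕ) : Set Ω :=
  ⋂ (p : ℕ × ℕ) (q : ℕ × ℕ) (_ : dy p ≤ (N : ℝ≥0)) (_ : dy q ≤ (N : ℝ≥0))
    (_ : |(dy p : ℝ) - dy q| ≤ (1/2) ^ m), {ω | |X (dy p) ω - X (dy q) ω| ≤ 1/(k+1)}

def B (X : ℝ≥0 → Ω → ℝ) (N : ℕ) : Set Ω := (⋂ k, ⋃ m, S X N k m)ᶜ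

lemma mem_S {X : ℝ≥0 → Ω → ℝ} {ω : Ω} {N k m : ℕ} :
    ω ∈ S X N k m ↔ ∀ p q : ℕ × ℕ, dy p ≤ (N : ℝ≥0) → dy q ≤ (N : ℝ≥0) →
      |(dy p : ℝ) - dy q| ≤ (1/2) ^ m → |X (dy p) ω - X (dy q) ω| ≤ 1/(k+1) := by
  simp [S]

lemma good_iff {X : ℝ≥0 → Ω → ℝ} {ω : Ω} : good X ω ↔ ∀ N : ℕ, ω ∉ B X N := by
  simp only [good, B, mem_compl_iff, not_not, mem_iInter, mem_iUnion]
  constructor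
  · intro hg N k
    obtain ⟨m, hm⟩ := hg N k
    exact ⟨m, mem_S.2 hm⟩
  · intro hb N k
    obtain ⟨m, hm⟩ := hb N k
    exact ⟨m, mem_S.1 hm⟩

lemma badSet_eq (X : ℝ≥0 → Ω → ℝ) : {ω | ¬ good X ω} = ⋃ N, B X N := by
  ext ω
  simp only [mem_setOf_eq, good_iff, mem_iUnion]
  push_neg
  rfl


variable {mΩ : MeasurableSpace Ω}

lemma aux_meas {m : MeasurableSpace Ω} {f g : Ω → ℝ} (hf : Measurable f)
    (hg : Measurable g) (c : ℝ) : MeasurableSet {ω | |f ω - g ω| ≤ c} :=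
  (hf.sub hg).abs measurableSet_Iic

lemma measurableSet_S (𝓕 : Filtration ℝ≥0 mΩ) {X : ℝ≥0 → Ω → ℝ} (hX : Adapted 𝓕 X)
    (N k m : ℕ) : MeasurableSet[𝓕 (N : ℝ≥0)] (S X N k m) := by
  refine MeasurableSet.iInter fun p => MeasurableSet.iInter fun q => ?_
  refine MeasurableSet.iInter fun h1 => MeasurableSet.iInter fun h2 =>
    MeasurableSet.iInter fun h3 => ?_
  have hp : Measurable[𝓕 (N : ℝ≥0)] (X (dy p)) :=
    (hX (dy p)).mono (𝓕.mono h1) le_rfl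
  have hq : Measurable[𝓕 (N : ℝ≥0)] (X (dy q)) :=
    (hX (dy q)).mono (𝓕.mono h2) le_rfl
  exact aux_meas hp hq _

lemma measurableSet_B (𝓕 : Filtration ℝ≥0 mΩ) {X : ℝ≥0 → Ω → ℝ} (hX : Adapted 𝓕 X)
    (N : ℕ) : MeasurableSet[𝓕 (N : ℝ≥0)] (B X N) :=
  (MeasurableSet.iInter fun k => MeasurableSet.iUnion fun m =>
    measurableSet_S 𝓕 hX N k m).compl


lemma B_subset {X Y : ℝ≥0 → Ω → ℝ} (hYcont : ∀ ω, Continuous fun t : ℝ≥0 => Y t ω)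
    (N : ℕ) : B X N ⊆ ⋃ p : ℕ × ℕ, {ω | X (dy p) ω ≠ Y (dy p) ω} := by
  intro ω hω
  by_contra hc
  simp only [mem_iUnion, mem_setOf_eq, not_exists, not_not] at hc
  apply hω
  simp only [B, mem_compl_iff, not_not, mem_iInter, mem_iUnion]
  intro k
  -- uniform continuity of Y · ω on Icc 0 N
  have hUC : UniformContinuousOn (fun t : ℝ≥0 => Y t ω) (Icc 0 (N : ℝ≥0)) :=
    isCompact_Icc.uniformContinuousOn_of_continuous (hYcont ω).continuousOn
  rw [Metric.uniformContinuousOn_iff_le] at hUC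
  obtain ⟨δ, hδ, hδ'⟩ := hUC (1/(k+1)) (by positivity)
  obtain ⟨m, hm⟩ := exists_pow_lt_of_lt_one hδ (by norm_num : (1:ℝ)/2 < 1)
  refine ⟨m, mem_S.2 fun p q h1 h2 h3 => ?_⟩
  rw [hc p, hc q]
  have h4 : dist (dy p) (dy q) ≤ δ := by
    rw [NNReal.dist_eq]
    exact h3.trans hm.le
  exact hδ' (dy p) ⟨zero_le, h1⟩ (dy q) ⟨zero_le, h2⟩ h4

lemma B_null (P : Measure Ω) {X Y : ℝ≥0 → Ω → ℝ}
    (hYcont : ∀ ω, Continuous fun t : ℝ≥0 => Y t ω)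
    (hmod : ∀ t : ℝ≥0, ∀ᵐ ω ∂P, X t ω = Y t ω) (N : ℕ) : P (B X N) = 0 := by
  refine measure_mono_null (B_subset hYcont N) (measure_iUnion_null fun p => ?_)
  have := hmod (dy p)
  rw [ae_iff] at this
  simpa using this


def L (X : ℝ≥0 → Ω → ℝ) (t : ℝ≥0) (ω : Ω) : ℝ := liminf (fun n => X (u n t) ω) atTop

lemma u_le_nat (n : ℕ) (t : ℝ≥0) (N : ℕ) (hN : (t : ℝ) + 1 ≤ N) : u n t ≤ (N : ℝ≥0) := by
  rw [← NNReal.coe_le_coe]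
  push_cast
  have := u_le n t
  have h2 : ((1:ℝ)/2) ^ n ≤ 1 := pow_le_one₀ (by norm_num) (by norm_num)
  linarith

lemma abs_u_sub_u (n n' : ℕ) (s t : ℝ≥0) (m : ℕ) (hn : m ≤ n) (hn' : m ≤ n') :
    |(u n s : ℝ) - u n' t| ≤ |(s : ℝ) - t| + (1/2) ^ m := by
  have h1 := le_u n s; have h2 := u_le n s
  have h3 := le_u n' t; have h4 := u_le n' t
  have h5 : ((1:ℝ)/2) ^ n ≤ (1/2) ^ m := pow_le_pow_of_le_one (by norm_num) (by norm_num) hn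
  have h6 : ((1:ℝ)/2) ^ n' ≤ (1/2) ^ m := pow_le_pow_of_le_one (by norm_num) (by norm_num) hn'
  rw [abs_le]
  constructor <;> nlinarith [le_abs_self ((s:ℝ) - t), neg_abs_le ((s:ℝ) - t)]

/-- On a good `ω`, near `t` the sequence values are close: key estimate. -/
lemma good.key {X : ℝ≥0 → Ω → ℝ} {ω : Ω} (hg : good X ω) (t : ℝ≥0) {ε : ℝ} (hε : 0 < ε) :
    ∃ m : ℕ, ∀ s : ℝ≥0, |(s : ℝ) - t| ≤ (1/2) ^ (m+1) → ∀ n n', m + 1 ≤ n → m + 1 ≤ n' →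
      |X (u n s) ω - X (u n' t) ω| < ε := by
  obtain ⟨k, hk⟩ := exists_nat_one_div_lt hε
  set N : ℕ := ⌊(t : ℝ)⌋₊ + 3 with hNdef
  obtain ⟨m, hm⟩ := hg N k
  refine ⟨m, fun s hs n n' hn hn' => ?_⟩
  have htN2 : (t : ℝ) + 2 ≤ N := by
    have := Nat.lt_floor_add_one (t : ℝ)
    push_cast [hNdef]; linarith
  have htN : (t : ℝ) + 1 ≤ N := by linarith
  have hsN : (s : ℝ) + 1 ≤ N := by
    have hhalf : ((1:ℝ)/2) ^ (m+1) ≤ 1 := pow_le_one₀ (by norm_num) (by norm_num)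
    have h9 := (abs_le.1 hs).2
    linarith
  have hds : |(u n s : ℝ) - u n' t| ≤ (1/2) ^ m := by
    have := abs_u_sub_u n n' s t (m+1) hn hn'
    have h2 : |(s : ℝ) - t| + (1/2) ^ (m+1) ≤ (1/2) ^ m := by
      have : ((1:ℝ)/2) ^ (m+1) + (1/2) ^ (m+1) = (1/2) ^ m := by ring
      linarith [hs]
    linarith
  have := hm (n, ⌊(s : ℝ) * 2 ^ n⌋₊ + 1) (n', ⌊(t : ℝ) * 2 ^ n'⌋₊ + 1)
    (u_le_nat n s N hsN) (u_le_nat n' t N htN) hds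
  calc |X (u n s) ω - X (u n' t) ω| ≤ 1/(k+1) := this
  _ < ε := hk

lemma good.cauchy {X : ℝ≥0 → Ω → ℝ} {ω : Ω} (hg : good X ω) (t : ℝ≥0) :
    CauchySeq (fun n => X (u n t) ω) := by
  rw [Metric.cauchySeq_iff]
  intro ε hε
  obtain ⟨m, hm⟩ := hg.key t hε
  refine ⟨m + 1, fun n hn n' hn' => ?_⟩
  rw [Real.dist_eq]
  exact hm t (by rw [sub_self, abs_zero]; positivity) n n' hn hn'

lemma good.tendsto_L {X : ℝ≥0 → Ω → ℝ} {ω : Ω} (hg : good X ω) (t : ℝ≥0) :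
    Tendsto (fun n => X (u n t) ω) atTop (𝓝 (L X t ω)) := by
  obtain ⟨l, hl⟩ := cauchySeq_tendsto_of_complete (hg.cauchy t)
  rwa [show L X t ω = l from hl.liminf_eq]

lemma good.continuous_L {X : ℝ≥0 → Ω → ℝ} {ω : Ω} (hg : good X ω) :
    Continuous fun t : ℝ≥0 => L X t ω := by
  rw [Metric.continuous_iff]
  intro t ε hε
  obtain ⟨m, hm⟩ := hg.key t (half_pos hε)
  refine ⟨(1/2) ^ (m+1), by positivity, fun s hs => ?_⟩
  rw [NNReal.dist_eq] at hs
  have hd : ∀ n, m + 1 ≤ n → dist (X (u n s) ω) (X (u n t) ω) ≤ ε/2 := fun n hn => by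
    rw [Real.dist_eq]; exact (hm s hs.le n n hn hn).le
  have : Tendsto (fun n => dist (X (u n s) ω) (X (u n t) ω)) atTop
      (𝓝 (dist (L X s ω) (L X t ω))) := (hg.tendsto_L s).dist (hg.tendsto_L t)
  have h2 : dist (L X s ω) (L X t ω) ≤ ε/2 :=
    le_of_tendsto this (eventually_atTop.2 ⟨m+1, hd⟩)
  linarith


lemma aux_liminf {m : MeasurableSpace Ω} {f : ℕ → Ω → ℝ} (hf : ∀ n, Measurable (f n)) :
    Measurable fun ω => liminf (fun n => f n ω) atTop := Measurable.liminf hf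

lemma measurable_L (𝓕 : Filtration ℝ≥0 mΩ) {X : ℝ≥0 → Ω → ℝ} (hX : Adapted 𝓕 X)
    (hrc : ∀ t : ℝ≥0, (𝓕 t : MeasurableSpace Ω) = ⨅ u ∈ Set.Ioi t, 𝓕 u) (t : ℝ≥0) :
    Measurable[𝓕 t] (L X t) := by
  have hv : ∀ v : ℝ≥0, t < v → Measurable[𝓕 v] (L X t) := by
    intro v hv
    have hvt : (0:ℝ) < (v : ℝ) - t := by
      rw [sub_pos]; exact_mod_cast hv
    obtain ⟨n₀, hn₀⟩ := exists_pow_lt_of_lt_one hvt (by norm_num : (1:ℝ)/2 < 1)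
    have hkey : L X t = fun ω => liminf (fun n => X (u (n + n₀) t) ω) atTop := by
      funext ω
      exact (liminf_nat_add (fun n => X (u n t) ω) n₀).symm
    rw [hkey]
    refine aux_liminf fun n => ?_
    have hle : u (n + n₀) t ≤ v := by
      rw [← NNReal.coe_le_coe]
      have h1 := u_le (n + n₀) t
      have h2 : ((1:ℝ)/2) ^ (n + n₀) ≤ (1/2) ^ n₀ :=
        pow_le_pow_of_le_one (by norm_num) (by norm_num) (by omega)
      linarith
    exact (hX (u (n + n₀) t)).mono (𝓕.mono hle) le_rfl
  rw [hrc t]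
  intro s hs
  refine MeasurableSpace.measurableSet_iInf.2 fun v => ?_
  refine MeasurableSpace.measurableSet_iInf.2 fun hvt => ?_
  exact hv v hvt hs


lemma aux_ind {m : MeasurableSpace Ω} {f : Ω → ℝ} {s : Set Ω} (hf : Measurable f)
    (hs : MeasurableSet s) : StronglyMeasurable (s.indicator f) :=
  (hf.indicator hs).stronglyMeasurable

end CAM
end


open CAM in
/-- On a space satisfying the N-usual conditions, an adapted process admitting a
modification `Y` with continuous paths admits a continuous *adapted* modification, and
any continuous adapted modification is indistinguishable from `Y`. -/
theorem continuous_adapted_modification {mΩ : MeasurableSpace Ω}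
    (𝓕 : Filtration ℝ≥0 mΩ) (P : Measure Ω) [IsProbabilityMeasure P]
    (h : NUsual 𝓕 P) (X Y : ℝ≥0 → Ω → ℝ) (hX : Adapted 𝓕 X)
    (hYcont : ∀ ω, Continuous fun t : ℝ≥0 => Y t ω)
    (hmod : ∀ t : ℝ≥0, ∀ᵐ ω ∂P, X t ω = Y t ω) :
    (∃ Z : ℝ≥0 → Ω → ℝ, (∀ ω, Continuous fun t : ℝ≥0 => Z t ω) ∧ Adapted 𝓕 Z ∧
      ∀ t : ℝ≥0, ∀ᵐ ω ∂P, X t ω = Z t ω) ∧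
    ∀ Z : ℝ≥0 → Ω → ℝ,
      ((∀ ω, Continuous fun t : ℝ≥0 => Z t ω) ∧ Adapted 𝓕 Z ∧
        ∀ t : ℝ≥0, ∀ᵐ ω ∂P, X t ω = Z t ω) →
      ∀ᵐ ω ∂P, ∀ t : ℝ≥0, Z t ω = Y t ω := by
  constructor
  · -- existence
    have hneg : NNegligible 𝓕 P {ω | ¬ good X ω} :=
      ⟨B X, fun n => measurableSet_B 𝓕 hX n, fun n => B_null P hYcont hmod n,
        (badSet_eq X).le⟩
    have hbad0 : MeasurableSet[𝓕 0] {ω | ¬ good X ω} := h.1 _ hneg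
    have hPbad : P {ω | ¬ good X ω} = 0 := by
      rw [badSet_eq X]
      exact measure_iUnion_null fun N => B_null P hYcont hmod N
    have haegood : ∀ᵐ ω ∂P, good X ω := by
      rw [ae_iff]; exact hPbad
    have hGmeas : ∀ t : ℝ≥0, MeasurableSet[𝓕 t] {ω | good X ω} := by
      intro t
      have : MeasurableSet[𝓕 t] {ω | ¬ good X ω} := 𝓕.mono (zero_le : (0:ℝ≥0) ≤ t) _ hbad0
      have h2 := this.compl
      rwa [show {ω | ¬ good X ω}ᶜ = {ω | good X ω} by ext ω; simp] at h2
    refine ⟨fun t => Set.indicator {ω | good X ω} (L X t), ?_, ?_, ?_⟩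
    · intro ω
      by_cases hg : good X ω
      · have : (fun t : ℝ≥0 => Set.indicator {ω | good X ω} (L X t) ω) =
            fun t => L X t ω := by
          funext t; exact Set.indicator_of_mem hg _
        rw [this]
        exact hg.continuous_L
      · have : (fun t : ℝ≥0 => Set.indicator {ω | good X ω} (L X t) ω) =
            fun _ => 0 := by
          funext t; exact Set.indicator_of_notMem hg _
        rw [this]
        exact continuous_const
    · intro t
      exact (aux_ind (measurable_L 𝓕 hX h.2 t) (hGmeas t)).measurable
    · intro t
      filter_upwards [haegood, ae_all_iff.2 fun n => hmod (u n t), hmod t] with ω hg hn ht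
      have h1 : Tendsto (fun n => X (u n t) ω) atTop (𝓝 (L X t ω)) := hg.tendsto_L t
      simp only [hn] at h1
      have h2 : Tendsto (fun n => Y (u n t) ω) atTop (𝓝 (Y t ω)) :=
        ((hYcont ω).tendsto t).comp (tendsto_u t)
      have h3 : L X t ω = Y t ω := tendsto_nhds_unique h1 h2
      have h4 : Set.indicator {ω | good X ω} (L X t) ω = L X t ω :=
        Set.indicator_of_mem hg _
      rw [h4, h3, ht]
  · -- uniqueness
    rintro Z ⟨hZc, _, hZmod⟩
    have hq : ∀ p : ℕ × ℕ, ∀ᵐ ω ∂P, Z (dy p) ω = Y (dy p) ω := fun p => by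
      filter_upwards [hZmod (dy p), hmod (dy p)] with ω h1 h2
      rw [← h1, h2]
    filter_upwards [ae_all_iff.2 hq] with ω hω t
    have heq : ∀ n, Z (u n t) ω = Y (u n t) ω := fun n => hω _
    have h1 : Tendsto (fun n => Z (u n t) ω) atTop (𝓝 (Z t ω)) :=
      ((hZc ω).tendsto t).comp (tendsto_u t)
    have h2 : Tendsto (fun n => Y (u n t) ω) atTop (𝓝 (Y t ω)) :=
      ((hYcont ω).tendsto t).comp (tendsto_u t)
    simp only [heq] at h1
    exact tendsto_nhds_unique h1 h2
end

section
/- Let (X_t)_{t≥0} be a real-valued progressively measurable process defined on a filtered probability space (Ω, F, (F_t)_{t≥0}, P) satisfying the N-usual conditions. Then for every Borel set A ⊆ ℝ, the hitting time T_A := inf{t ≥ 0 : X_t ∈ A} (with inf ∅ = ∞) is an (F_t)_{t≥0}-stopping time. -/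
open MeasureTheory Set Filter Topology
open scoped NNReal ENNReal

section Auxiliary

/-- König-type cluster extraction. -/

lemma exists_cluster_seq (m : ℕ → ℕ) (s : ℕ → ℕ → ℕ)
    (hs : ∀ n k, k < n → s n k ≤ m k) :
    ∃ τ : ℕ → ℕ, (∀ k, τ k ≤ m k) ∧
      ∀ j N : ℕ, ∃ n, N ≤ n ∧ j ≤ n ∧ ∀ k < j, s n k = τ k := by
  classical
  set x : ℕ → (ℕ → ℕ) := fun n k => if k < n then s n k else 0 with hx
  have hxmem : ∀ n, x n ∈ Set.univ.pi (fun k => Set.Iic (m k)) := by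
    intro n k _
    simp only [hx, Set.mem_Iic]
    split
    · exact hs n k ‹_›
    · exact Nat.zero_le _
  have hK : IsCompact (Set.univ.pi (fun k => Set.Iic (m k))) :=
    isCompact_univ_pi fun k => (Set.finite_Iic (m k)).isCompact
  have hle : Filter.map x atTop ≤ 𝓟 (Set.univ.pi (fun k => Set.Iic (m k))) := by
    rw [Filter.le_principal_iff, Filter.mem_map]
    filter_upwards with n using hxmem n
  obtain ⟨τ, hτmem, hτ⟩ := hK.exists_clusterPt hle
  refine ⟨τ, fun k => hτmem k (mem_univ k), fun j N => ?_⟩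
  have hV : {σ : ℕ → ℕ | ∀ k < j, σ k = τ k} ∈ 𝓝 τ := by
    have hopen : IsOpen {σ : ℕ → ℕ | ∀ k < j, σ k = τ k} := by
      have he : {σ : ℕ → ℕ | ∀ k < j, σ k = τ k} =
          ⋂ k ∈ Finset.range j, (fun σ : ℕ → ℕ => σ k) ⁻¹' {τ k} := by
        ext σ; simp [Finset.mem_range]
      rw [he]
      exact isOpen_biInter_finset fun k _ =>
        (continuous_apply k).isOpen_preimage _ (isOpen_discrete _)
    exact hopen.mem_nhds (fun k _ => rfl)
  have hfreq : ∃ᶠ n in atTop, x n ∈ {σ : ℕ → ℕ | ∀ k < j, σ k = τ k} :=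
    (mapClusterPt_iff_frequently.mp hτ) _ hV
  obtain ⟨n, hn, hmem⟩ := (hfreq.and_eventually (eventually_ge_atTop (max N j))).exists
  refine ⟨n, le_trans (le_max_left _ _) hmem, le_trans (le_max_right _ _) hmem, fun k hk => ?_⟩
  have h2 := hn k hk
  simp only [hx] at h2
  rwa [if_pos (lt_of_lt_of_le hk (le_trans (le_max_right _ _) hmem))] at h2

lemma analytic_inner {α : Type*} [TopologicalSpace α] [PolishSpace α] [MeasurableSpace α]
    [BorelSpace α] (ν : Measure α) [IsFiniteMeasure ν] {Y : Set α} (hY : AnalyticSet Y)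
    {ε : ℝ≥0∞} (hε : ε ≠ 0) :
    ∃ C, MeasurableSet C ∧ C ⊆ Y ∧ ν Y ≤ ν C + ε := by
  classical
  rw [AnalyticSet_def] at hY
  rcases hY with rfl | ⟨f, fc, rfl⟩
  · exact ⟨∅, MeasurableSet.empty, Subset.rfl, by simp⟩
  letI := TopologicalSpace.upgradeIsCompletelyMetrizable α
  -- the scheme sets
  set Sig : (ℕ → ℕ) → ℕ → Set (ℕ → ℕ) := fun mf n => {σ | ∀ k < n, σ k ≤ mf k} with hSig
  have hδ0 : ∀ n : ℕ, ε / 2 ^ (n + 1) ≠ 0 := fun n => by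
    simp [ENNReal.div_eq_zero_iff, hε, (ENNReal.pow_lt_top (by norm_num : (2:ℝ≥0∞) < ⊤)).ne]
  -- one-step choice
  have hstep : ∀ (mf : ℕ → ℕ) (n : ℕ), ∃ j : ℕ,
      ν (f '' Sig mf n) ≤ ν (f '' Sig (Function.update mf n j) (n + 1)) + ε / 2 ^ (n + 1) := by
    intro mf n
    have hmono : Monotone fun j : ℕ => f '' Sig (Function.update mf n j) (n + 1) := by
      intro j j' hj
      refine image_mono fun σ hσ k hk => ?_
      rcases Nat.lt_succ_iff_lt_or_eq.mp hk with hk' | rfl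
      · have := hσ k hk
        rw [Function.update_of_ne hk'.ne] at this
        rw [Function.update_of_ne hk'.ne]
        exact this
      · have := hσ k (Nat.lt_succ_self _)
        rw [Function.update_self] at this ⊢
        exact this.trans hj
    have hcover : Sig mf n = ⋃ j, Sig (Function.update mf n j) (n + 1) := by
      ext σ
      constructor
      · intro hσ
        refine mem_iUnion.mpr ⟨σ n, fun k hk => ?_⟩
        rcases Nat.lt_succ_iff_lt_or_eq.mp hk with hk' | rfl
        · rw [Function.update_of_ne hk'.ne]; exact hσ k hk'
        · rw [Function.update_self]
      · rintro ⟨_, ⟨j, rfl⟩, hσ⟩ k hk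
        have := hσ k (Nat.lt_succ_of_lt hk)
        rwa [Function.update_of_ne hk.ne] at this
    have hsup : ν (f '' Sig mf n) = ⨆ j, ν (f '' Sig (Function.update mf n j) (n + 1)) := by
      rw [hcover, image_iUnion, hmono.measure_iUnion]
    by_cases h0 : ν (f '' Sig mf n) = 0
    · exact ⟨0, by simp [h0]⟩
    have hlt : ν (f '' Sig mf n) - ε / 2 ^ (n + 1) < ν (f '' Sig mf n) :=
      ENNReal.sub_lt_self (measure_ne_top ν _) h0 (hδ0 n)
    obtain ⟨j, hj⟩ := lt_iSup_iff.mp (lt_of_lt_of_eq hlt hsup)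
    exact ⟨j, tsub_le_iff_right.mp hj.le⟩
  choose c hc using hstep
  -- recursive bounds
  set F : ℕ → (ℕ → ℕ) := fun n => Nat.rec (fun _ => 0) (fun n mf => Function.update mf n (c mf n)) n
    with hF
  have hFs : ∀ n, F (n + 1) = Function.update (F n) n (c (F n) n) := fun n => rfl
  set m : ℕ → ℕ := fun k => F (k + 1) k with hm
  have hFm : ∀ n k, k < n → F n k = m k := by
    have key : ∀ n k, k < n → F n k = F (k + 1) k := by
      intro n
      induction n with
      | zero => intro k hk; exact absurd hk (Nat.not_lt_zero k)
      | succ n ih =>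
        intro k hk
        rcases Nat.lt_succ_iff_lt_or_eq.mp hk with hk' | rfl
        · rw [hFs n, Function.update_of_ne hk'.ne, ih k hk']
        · rfl
    exact key
  have hSigF : ∀ n, Sig (F n) n = {σ : ℕ → ℕ | ∀ k < n, σ k ≤ m k} := by
    intro n; ext σ
    exact ⟨fun hσ k hk => (hFm n k hk) ▸ hσ k hk, fun hσ k hk => (hFm n k hk).symm ▸ hσ k hk⟩
  -- invariant
  have hInv : ∀ n, ν (range f) ≤ ν (f '' Sig (F n) n) + ∑ k ∈ Finset.range n, ε / 2 ^ (k + 1) := by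
    intro n
    induction n with
    | zero =>
      have : Sig (F 0) 0 = univ := by ext σ; simp [hSig]
      simp [this]
    | succ n ih =>
      have step := hc (F n) n
      rw [← hFs n] at step
      calc ν (range f) ≤ ν (f '' Sig (F n) n) + ∑ k ∈ Finset.range n, ε / 2 ^ (k + 1) := ih
        _ ≤ (ν (f '' Sig (F (n+1)) (n+1)) + ε / 2 ^ (n+1)) + ∑ k ∈ Finset.range n, ε / 2 ^ (k + 1) :=
          add_le_add_left step _
        _ = ν (f '' Sig (F (n+1)) (n+1)) + ∑ k ∈ Finset.range (n+1), ε / 2 ^ (k + 1) := by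
          rw [Finset.sum_range_succ]; ring
  -- sum bound
  have hsum : ∀ n, ∑ k ∈ Finset.range n, ε / 2 ^ (k + 1) ≤ ε := by
    have key : ∀ n, ∑ k ∈ Finset.range n, ε / 2 ^ (k + 1) + ε / 2 ^ n = ε := by
      intro n
      induction n with
      | zero => simp
      | succ n ih =>
        have hhalf : ε / 2 ^ (n + 1) = ε / 2 ^ n / 2 := by
          have h2 : ((2:ℝ≥0∞) ^ n * 2)⁻¹ = ((2:ℝ≥0∞) ^ n)⁻¹ * 2⁻¹ :=
            ENNReal.mul_inv (Or.inr (by norm_num)) (Or.inl (ENNReal.pow_ne_top (by norm_num)))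
          simp only [div_eq_mul_inv, pow_succ, h2, mul_assoc]
        rw [Finset.sum_range_succ, add_assoc, hhalf, ENNReal.add_halves, ih]
    intro n
    calc ∑ k ∈ Finset.range n, ε / 2 ^ (k + 1)
        ≤ ∑ k ∈ Finset.range n, ε / 2 ^ (k + 1) + ε / 2 ^ n := le_self_add
      _ = ε := key n
  have hbound : ∀ n, ν (range f) ≤ ν (f '' {σ : ℕ → ℕ | ∀ k < n, σ k ≤ m k}) + ε := fun n =>
    (hInv n).trans (by rw [hSigF n]; exact add_le_add_right (hsum n) _)
  -- the compact kernel
  set K : Set (ℕ → ℕ) := {σ | ∀ k, σ k ≤ m k} with hK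
  have hKc : IsCompact K := by
    have : K = Set.univ.pi fun k => Set.Iic (m k) := by
      ext σ; simp [hK, Set.mem_pi, Pi.le_def]
    rw [this]
    exact isCompact_univ_pi fun k => (Set.finite_Iic (m k)).isCompact
  -- the closures
  set cl : ℕ → Set α := fun n => closure (f '' {σ : ℕ → ℕ | ∀ k < n, σ k ≤ m k}) with hcl
  have hclanti : Antitone cl := by
    intro n n' hn
    exact closure_mono (image_mono fun σ hσ k hk => hσ k (hk.trans_le hn))
  -- the key claim
  have hclaim : (⋂ n, cl n) ⊆ f '' K := by
    intro x hx
    have hch : ∀ n : ℕ, ∃ σ : ℕ → ℕ, (∀ k < n, σ k ≤ m k) ∧ dist x (f σ) < 1 / (n + 1) := by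
      intro n
      have hxn : x ∈ cl n := mem_iInter.mp hx n
      rw [hcl, Metric.mem_closure_iff] at hxn
      obtain ⟨y, ⟨σ, hσ, rfl⟩, hd⟩ := hxn (1 / (n + 1)) (by positivity)
      exact ⟨σ, hσ, hd⟩
    choose s hs1 hs2 using hch
    obtain ⟨τ, hτm, hτ⟩ := exists_cluster_seq m s fun n k hk => hs1 n k hk
    have hxτ : x = f τ := by
      apply eq_of_forall_dist_le
      intro δ hδ
      -- cylinder neighbourhood from continuity
      have hmem : f ⁻¹' Metric.ball (f τ) (δ / 2) ∈ 𝓝 τ :=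
        fc.continuousAt (Metric.ball_mem_nhds _ (by positivity))
      rw [nhds_pi, Filter.mem_pi] at hmem
      obtain ⟨I, Ifin, t, ht, hsub⟩ := hmem
      obtain ⟨j0, hj0⟩ := Ifin.bddAbove
      set j := j0 + 1 with hj
      have hcyl : ∀ σ : ℕ → ℕ, (∀ k < j, σ k = τ k) → dist (f σ) (f τ) < δ / 2 := by
        intro σ hσ
        have : σ ∈ I.pi t := by
          intro i hi
          have : σ i = τ i := hσ i (Nat.lt_succ_of_le (hj0 hi))
          rw [this]
          have := ht i
          rwa [nhds_discrete, Filter.mem_pure] at this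
        exact hsub this
      obtain ⟨N, hN⟩ := exists_nat_one_div_lt (by positivity : (0:ℝ) < δ / 2)
      obtain ⟨n, hnN, hnj, hagree⟩ := hτ j N
      have h1 : dist x (f (s n)) < 1 / (N + 1) :=
        (hs2 n).trans_le (by
          apply div_le_div_of_nonneg_left (by norm_num) (by positivity)
          exact_mod_cast add_le_add_left (Nat.cast_le.mpr hnN) 1)
      have h2 : dist (f (s n)) (f τ) < δ / 2 := hcyl (s n) hagree
      calc dist x (f τ) ≤ dist x (f (s n)) + dist (f (s n)) (f τ) := dist_triangle _ _ _
        _ ≤ δ / 2 + δ / 2 := add_le_add (h1.trans hN).le h2.le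
        _ = δ := by ring
    exact ⟨τ, hτm, hxτ.symm⟩
  -- conclude
  refine ⟨f '' K, ((hKc.image fc).isClosed.measurableSet), image_subset_range f K, ?_⟩
  have hmeascl : ∀ n, NullMeasurableSet (cl n) ν := fun n =>
    isClosed_closure.measurableSet.nullMeasurableSet
  have hIneq : ν (⋂ n, cl n) = ⨅ n, ν (cl n) :=
    hclanti.measure_iInter hmeascl ⟨0, measure_ne_top ν _⟩
  have h1 : ν (range f) ≤ ν (⋂ n, cl n) + ε := by
    rw [hIneq, ENNReal.iInf_add]
    exact le_iInf fun n => (hbound n).trans (add_le_add_left (measure_mono subset_closure) _)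
  exact h1.trans (add_le_add_left (measure_mono hclaim) _)

lemma analytic_sandwich {α : Type*} [TopologicalSpace α] [PolishSpace α] [MeasurableSpace α]
    [BorelSpace α] (ν : Measure α) [IsFiniteMeasure ν] {Y : Set α} (hY : AnalyticSet Y) :
    ∃ C D : Set α, MeasurableSet C ∧ MeasurableSet D ∧ C ⊆ Y ∧ Y ⊆ C ∪ D ∧ ν D = 0 := by
  have h : ∀ n : ℕ, ∃ C, MeasurableSet C ∧ C ⊆ Y ∧ ν Y ≤ ν C + ((n : ℝ≥0∞) + 1)⁻¹ :=
    fun n => analytic_inner ν hY (by simp)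
  choose C0 hmeas hsub hle using h
  obtain ⟨H, hYH, hHmeas, hH⟩ := exists_measurable_superset ν Y
  set C : Set α := ⋃ n, C0 n with hC
  have hCY : C ⊆ Y := iUnion_subset hsub
  have hCmeas : MeasurableSet C := MeasurableSet.iUnion hmeas
  have hνC : ν Y ≤ ν C := by
    apply ENNReal.le_of_forall_pos_le_add
    intro η hη _
    obtain ⟨n, hn⟩ := ENNReal.exists_inv_nat_lt (by exact_mod_cast hη.ne' : (η : ℝ≥0∞) ≠ 0)
    refine (hle n).trans (add_le_add (measure_mono (subset_iUnion C0 n)) ?_)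
    refine le_trans ?_ hn.le
    exact ENNReal.inv_le_inv.mpr (by simp)
  refine ⟨C, H \ C, hCmeas, hHmeas.diff hCmeas, hCY, ?_, ?_⟩
  · intro x hx
    by_cases hxC : x ∈ C
    · exact Or.inl hxC
    · exact Or.inr ⟨hYH hx, hxC⟩
  · rw [measure_diff (hCY.trans hYH) hCmeas.nullMeasurableSet (measure_ne_top ν C), hH]
    exact tsub_eq_zero_of_le hνC

/-- Measurable projection along a Polish factor, up to a null set. -/
lemma proj_sandwich {K : Type*} [TopologicalSpace K] [PolishSpace K] [mK : MeasurableSpace K]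
    [BorelSpace K] {Ω : Type*} {G : MeasurableSpace Ω} (μ : @Measure Ω G)
    [IsFiniteMeasure μ] {E : Set (K × Ω)} (hE : MeasurableSet[mK.prod G] E) :
    ∃ C D : Set Ω, MeasurableSet[G] C ∧ MeasurableSet[G] D ∧ C ⊆ Prod.snd '' E ∧
      Prod.snd '' E ⊆ C ∪ D ∧ μ D = 0 := by
  classical
  -- Step 1: countably generated sub-σ-algebra
  obtain ⟨g, hg, hEg⟩ : ∃ g : ℕ → Set Ω, (∀ n, MeasurableSet[G] (g n)) ∧
      MeasurableSet[mK.prod (MeasurableSpace.generateFrom (Set.range g))] E := by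
    set P : Set (K × Ω) → Prop := fun E => ∃ g : ℕ → Set Ω, (∀ n, MeasurableSet[G] (g n)) ∧
      MeasurableSet[mK.prod (MeasurableSpace.generateFrom (Set.range g))] E with hP
    set M : MeasurableSpace (K × Ω) :=
      { MeasurableSet' := P
        measurableSet_empty := ⟨fun _ => ∅, fun _ => MeasurableSet.empty,
          @MeasurableSet.empty _ (mK.prod (MeasurableSpace.generateFrom
            (Set.range fun _ : ℕ => (∅ : Set Ω))))⟩
        measurableSet_compl := by
          rintro s ⟨g, hg, hs⟩
          exact ⟨g, hg, hs.compl⟩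
        measurableSet_iUnion := by
          intro f hf
          choose g hg hfg using hf
          refine ⟨fun n => g (Nat.unpair n).1 (Nat.unpair n).2, fun n => hg _ _, ?_⟩
          refine MeasurableSet.iUnion fun i => ?_
          have hle : MeasurableSpace.generateFrom (Set.range (g i)) ≤
              MeasurableSpace.generateFrom
                (Set.range fun n => g (Nat.unpair n).1 (Nat.unpair n).2) := by
            apply MeasurableSpace.generateFrom_le
            rintro _ ⟨k, rfl⟩
            exact MeasurableSpace.measurableSet_generateFrom
              ⟨Nat.pair i k, by simp⟩
          have hprodle : mK.prod (MeasurableSpace.generateFrom (Set.range (g i))) ≤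
              mK.prod (MeasurableSpace.generateFrom
                (Set.range fun n => g (Nat.unpair n).1 (Nat.unpair n).2)) :=
            sup_le (le_sup_left) ((MeasurableSpace.comap_mono hle).trans le_sup_right)
          exact hprodle _ (hfg i) } with hM
    have hle : mK.prod G ≤ M := by
      rw [show mK.prod G = @Prod.instMeasurableSpace K Ω mK G from rfl,
        ← @generateFrom_prod K Ω mK G]
      apply MeasurableSpace.generateFrom_le
      rintro _ ⟨s, hs, t, ht, rfl⟩
      exact ⟨fun _ => t, fun _ => ht,
        MeasurableSet.prod hs (MeasurableSpace.measurableSet_generateFrom ⟨0, rfl⟩)⟩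
    exact hle E hE
  -- Step 2: Cantor space coding
  set j : Ω → (ℕ → Bool) := fun ω n => if ω ∈ g n then true else false with hj
  have hjmeas : @Measurable Ω (ℕ → Bool) G _ j := by
    apply measurable_pi_lambda
    intro n
    exact Measurable.ite (hg n) measurable_const measurable_const
  have hcylsub : MeasurableSpace.generateFrom (Set.range g) ≤
      MeasurableSpace.comap j inferInstance := by
    apply MeasurableSpace.generateFrom_le
    rintro _ ⟨n, rfl⟩
    refine ⟨(fun x : ℕ → Bool => x n) ⁻¹' {true},
      (measurable_pi_apply n) (by trivial : MeasurableSet ({true} : Set Bool)), ?_⟩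
    · ext ω
      by_cases hω : ω ∈ g n <;> simp [hj, hω]
  have hprodle : mK.prod (MeasurableSpace.generateFrom (Set.range g)) ≤
      MeasurableSpace.comap (Prod.map id j) (@Prod.instMeasurableSpace K (ℕ → Bool) mK _) := by
    have h1 : @Prod.instMeasurableSpace K (ℕ → Bool) mK _ =
        mK.comap Prod.fst ⊔ MeasurableSpace.pi.comap Prod.snd := rfl
    rw [h1, MeasurableSpace.comap_sup, MeasurableSpace.comap_comp,
      MeasurableSpace.comap_comp]
    have h2 : (Prod.fst ∘ Prod.map id j : K × Ω → K) = Prod.fst := rfl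
    have h3 : (Prod.snd ∘ Prod.map id j : K × Ω → (ℕ → Bool)) = j ∘ Prod.snd := rfl
    rw [h2, h3, ← MeasurableSpace.comap_comp]
    exact sup_le le_sup_left ((MeasurableSpace.comap_mono
      (hcylsub.trans (le_of_eq rfl))).trans le_sup_right)
  obtain ⟨Et, hEt, hEtpre⟩ := hprodle E hEg
  set Y : Set (ℕ → Bool) := Prod.snd '' Et with hY
  haveI : PolishSpace (ℕ → Bool) := {}
  haveI : PolishSpace (K × (ℕ → Bool)) := {}
  have hYanal : AnalyticSet Y := hEt.analyticSet.image_of_continuous continuous_snd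
  set ν : Measure (ℕ → Bool) := @Measure.map Ω (ℕ → Bool) G _ j μ with hν
  haveI : IsFiniteMeasure ν := by
    constructor
    rw [hν, Measure.map_apply (μ := μ) hjmeas MeasurableSet.univ]
    exact measure_lt_top μ _
  obtain ⟨C', D', hC'm, hD'm, hC'Y, hYCD, hD'0⟩ := analytic_sandwich ν hYanal
  refine ⟨j ⁻¹' C', j ⁻¹' D', hjmeas hC'm, hjmeas hD'm, ?_, ?_, ?_⟩
  · intro ω hω
    obtain ⟨p, hp, hp2⟩ := hC'Y hω
    refine ⟨(p.1, ω), ?_, rfl⟩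
    rw [← hEtpre]
    show (p.1, j ω) ∈ Et
    rw [← hp2]
    exact hp
  · rintro _ ⟨⟨x, ω⟩, hx, rfl⟩
    have : j ω ∈ Y := by
      rw [← hEtpre] at hx
      exact ⟨(x, j ω), hx, rfl⟩
    exact hYCD this
  · rw [← hD'0, hν, Measure.map_apply (μ := μ) hjmeas hD'm]

end Auxiliary

variable {Ω : Type*}

/-- Hitting times of Borel sets by progressively measurable processes are stopping times,
under the N-usual conditions: `T_A ω = inf {t ≥ 0 | X t ω ∈ A}` (with `inf ∅ = ∞`)
satisfies `{ω | T_A ω ≤ t} ∈ 𝓕 t` for every `t`. -/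
theorem hitting_time_is_stopping_time {mΩ : MeasurableSpace Ω}
    (𝓕 : Filtration ℝ≥0 mΩ) (P : Measure Ω) [IsProbabilityMeasure P]
    (h : NUsual 𝓕 P) (X : ℝ≥0 → Ω → ℝ) (hX : ProgMeasurable 𝓕 X)
    (A : Set ℝ) (hA : MeasurableSet A) (T : Ω → ℝ≥0∞)
    (hT : ∀ ω, T ω = ⨅ (t : ℝ≥0) (_ : X t ω ∈ A), (t : ℝ≥0∞)) :
    ∀ t : ℝ≥0, MeasurableSet[𝓕 t] {ω | T ω ≤ (t : ℝ≥0∞)} := by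
  classical
  intro t
  -- the one-sided hitting sets
  set R : ℝ≥0 → Set Ω := fun w => {ω | ∃ s : ℝ≥0, s ≤ w ∧ X s ω ∈ A} with hR
  -- each `R w` belongs to `𝓕 u` whenever `w ≤ u`
  have hRmeas : ∀ w u : ℝ≥0, w ≤ u → MeasurableSet[𝓕 u] (R w) := by
    intro w u hwu
    haveI : PolishSpace (Set.Iic w) := (isClosed_Iic : IsClosed (Set.Iic w)).polishSpace
    set E : Set (↥(Set.Iic w) × Ω) := {p | X (p.1 : ℝ≥0) p.2 ∈ A} with hE
    have hEmeas : MeasurableSet[Subtype.instMeasurableSpace.prod (𝓕 w)] E :=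
      (hX w).measurable hA
    haveI : IsFiniteMeasure (P.trim (𝓕.le w)) := isFiniteMeasure_trim _
    obtain ⟨C, D, hCm, hDm, hCsub, hsub2, hD0⟩ :=
      proj_sandwich (K := ↥(Set.Iic w)) (G := 𝓕 w) (P.trim (𝓕.le w)) hEmeas
    have hproj : Prod.snd '' E = R w := by
      ext ω
      constructor
      · rintro ⟨⟨⟨s, hs⟩, ω'⟩, hmem, rfl⟩
        exact ⟨s, hs, hmem⟩
      · rintro ⟨s, hsw, hmem⟩
        exact ⟨(⟨s, hsw⟩, ω), hmem, rfl⟩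
    rw [hproj] at hCsub hsub2
    have hPD : P D = 0 := by
      rw [← trim_measurableSet_eq (𝓕.le w) hDm]; exact hD0
    have hNneg : NNegligible 𝓕 P (R w \ C) := by
      refine ⟨fun n => if w ≤ (n : ℝ≥0) then D else ∅, fun n => ?_, fun n => ?_, ?_⟩
      · by_cases hwn : w ≤ (n : ℝ≥0)
        · simp only [if_pos hwn]
          exact 𝓕.mono hwn _ hDm
        · simp only [if_neg hwn]
          exact @MeasurableSet.empty _ (𝓕 (n : ℝ≥0))
      · by_cases hwn : w ≤ (n : ℝ≥0)
        · simp only [if_pos hwn]; exact hPD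
        · simp only [if_neg hwn]; exact measure_empty
      · obtain ⟨n, hn⟩ := exists_nat_ge w
        intro ω hω
        refine mem_iUnion.mpr ⟨n, ?_⟩
        rw [if_pos hn]
        rcases hsub2 hω.1 with hc | hd
        · exact absurd hc hω.2
        · exact hd
    have hC0 : MeasurableSet[𝓕 0] (R w \ C) := h.1 _ hNneg
    have : R w = C ∪ (R w \ C) := (union_diff_cancel hCsub).symm
    rw [this]
    exact (𝓕.mono hwu _ hCm).union (𝓕.mono (zero_le : 0 ≤ u) _ hC0)
  -- reduce to `𝓕 u` for `u > t` by right-continuity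
  have key : ∀ u : ℝ≥0, t < u → MeasurableSet[𝓕 u] {ω | T ω ≤ (t : ℝ≥0∞)} := by
    intro u htu
    set d : ℕ → ℝ≥0 := fun n => (u - t) / (n + 1) with hd
    have hd0 : ∀ n, 0 < d n := by
      intro n
      have h1 : 0 < u - t := tsub_pos_iff_lt.mpr htu
      positivity
    set w : ℕ → ℝ≥0 := fun n => t + d n with hw
    have hwu : ∀ n, w n ≤ u := by
      intro n
      have h1 : d n ≤ u - t := div_le_self zero_le (by
        have : (1 : ℝ≥0) ≤ (n : ℝ≥0) + 1 := le_add_self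
        exact this)
      calc t + d n ≤ t + (u - t) := add_le_add_right h1 t
        _ = u := add_tsub_cancel_of_le htu.le
    have hset : {ω | T ω ≤ (t : ℝ≥0∞)} = ⋂ n, R (w n) := by
      ext ω
      simp only [mem_setOf_eq, mem_iInter]
      constructor
      · intro hTt n
        have hlt : T ω < (w n : ℝ≥0∞) :=
          lt_of_le_of_lt hTt (ENNReal.coe_lt_coe.mpr (lt_add_of_pos_right t (hd0 n)))
        rw [hT ω] at hlt
        obtain ⟨s, hs⟩ := iInf_lt_iff.mp hlt
        have hsA : X s ω ∈ A := by
          by_contra hc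
          rw [iInf_neg hc] at hs
          exact not_top_lt hs
        rw [iInf_pos hsA] at hs
        exact ⟨s, (ENNReal.coe_lt_coe.mp hs).le, hsA⟩
      · intro hω
        rw [hT ω]
        apply ENNReal.le_of_forall_pos_le_add
        intro η hη _
        have hdle : ∃ n, d n ≤ η := by
          obtain ⟨N, hN⟩ := exists_nat_gt ((u - t) / η)
          refine ⟨N, ?_⟩
          rw [hd]
          rw [div_le_iff₀ (by positivity : (0:ℝ≥0) < (N : ℝ≥0) + 1)]
          have h1 : u - t < N * η := by
            rwa [div_lt_iff₀ hη] at hN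
          calc u - t ≤ N * η := h1.le
            _ ≤ η * ((N : ℝ≥0) + 1) := by
              rw [mul_comm]
              exact mul_le_mul_right le_self_add η
        obtain ⟨n, hn⟩ := hdle
        obtain ⟨s, hsw, hsA⟩ := hω n
        calc (⨅ (s : ℝ≥0) (_ : X s ω ∈ A), (s : ℝ≥0∞))
            ≤ (s : ℝ≥0∞) := iInf_le_of_le s (iInf_le _ hsA)
          _ ≤ (w n : ℝ≥0∞) := ENNReal.coe_le_coe.mpr hsw
          _ = (t : ℝ≥0∞) + (d n : ℝ≥0∞) := by rw [hw]; push_cast; rfl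
          _ ≤ (t : ℝ≥0∞) + η := add_le_add_right (ENNReal.coe_le_coe.mpr hn) _
    rw [hset]
    exact MeasurableSet.iInter fun n => hRmeas (w n) u (hwu n)
  rw [h.2 t]
  refine MeasurableSpace.measurableSet_iInf.mpr fun u => ?_
  refine MeasurableSpace.measurableSet_iInf.mpr fun hu => ?_
  exact key u hu
end
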